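/- Let V be a finite set, ε > 0 a real number, E and K positive natural numbers, d : V × V → ℕ a cost function, and OPT, ALG : V × V → ℕ multiplicity functions. Define d′(u,v) = ⌈K·d(u,v)/(ε·E)⌉ for all u, v. Assume: (1) ∑_{(u,v)} OPT(u,v) ≤ K; (2) E ≤ ∑_{(u,v)} d(u,v)·OPT(u,v); and (3) ∑_{(u,v)} d′(u,v)·ALG(u,v) ≤ ∑_{(u,v)} d′(u,v)·OPT(u,v). Then ∑_{(u,v)} d(u,v)·ALG(u,v) ≤ (1 + ε) · ∑_{(u,v)} d(u,v)·OPT(u,v). -/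

import Mathlib

/-- **rounding analysis.** Let `V` be a finite set, `ε > 0` real,
`E, K` positive naturals, `d` a cost function and `OPT`, `ALG` multiplicity functions.
Put `d′(u,v) = ⌈K·d(u,v)/(ε·E)⌉`. If (1) `∑ OPT(u,v) ≤ K`, (2) `E ≤ d(OPT)`, and
(3) `d′(ALG) ≤ d′(OPT)`, then `d(ALG) ≤ (1 + ε)·d(OPT)`. -/
theorem rounding_approximation
    {V : Type*} [Fintype V]
    (ε : ℝ) (hε : 0 < ε) (E K : ℕ) (hE : 0 < E) (hK : 0 < K)
    (d OPT ALG : V × V → ℕ)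
    (d' : V × V → ℤ)
    (hd' : ∀ p : V × V, d' p = ⌈((K : ℝ) * (d p : ℝ)) / (ε * (E : ℝ))⌉)
    (h1 : ∑ p : V × V, OPT p ≤ K)
    (h2 : E ≤ ∑ p : V × V, d p * OPT p)
    (h3 : ∑ p : V × V, d' p * (ALG p : ℤ) ≤ ∑ p : V × V, d' p * (OPT p : ℤ)) :
    ∑ p : V × V, (d p : ℝ) * (ALG p : ℝ)
      ≤ (1 + ε) * ∑ p : V × V, (d p : ℝ) * (OPT p : ℝ) := by
  have hKpos : (0:ℝ) < K := by exact_mod_cast hK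
  have hEpos : (0:ℝ) < E := by exact_mod_cast hE
  have hεE : (0:ℝ) < ε * E := mul_pos hε hEpos
  set c : ℝ := ε * E / K with hc
  have hcpos : 0 < c := div_pos hεE hKpos
  -- d p ≤ c * d' p
  have hlow : ∀ p : V × V, (d p : ℝ) ≤ c * (d' p : ℝ) := by
    intro p
    have h := Int.le_ceil (((K : ℝ) * (d p : ℝ)) / (ε * (E : ℝ)))
    rw [← hd' p] at h
    have : (K : ℝ) * (d p : ℝ) / (ε * E) * c ≤ (d' p : ℝ) * c :=
      mul_le_mul_of_nonneg_right h hcpos.le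
    calc (d p : ℝ) = (K : ℝ) * (d p : ℝ) / (ε * E) * c := by
          rw [hc]; field_simp
      _ ≤ (d' p : ℝ) * c := this
      _ = c * (d' p : ℝ) := mul_comm _ _
  -- c * d' p ≤ d p + c
  have hhigh : ∀ p : V × V, c * (d' p : ℝ) ≤ (d p : ℝ) + c := by
    intro p
    have h := Int.ceil_lt_add_one (((K : ℝ) * (d p : ℝ)) / (ε * (E : ℝ)))
    rw [← hd' p] at h
    have : (d' p : ℝ) * c ≤ ((K : ℝ) * (d p : ℝ) / (ε * E) + 1) * c :=
      mul_le_mul_of_nonneg_right h.le hcpos.le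
    calc c * (d' p : ℝ) = (d' p : ℝ) * c := mul_comm _ _
      _ ≤ ((K : ℝ) * (d p : ℝ) / (ε * E) + 1) * c := this
      _ = (d p : ℝ) + c := by rw [hc]; field_simp
  have hALGnn : ∀ p : V × V, (0:ℝ) ≤ (ALG p : ℝ) := fun p => Nat.cast_nonneg _
  have hOPTnn : ∀ p : V × V, (0:ℝ) ≤ (OPT p : ℝ) := fun p => Nat.cast_nonneg _
  have h3' : (c * ∑ p : V × V, (d' p : ℝ) * (ALG p : ℝ))
      ≤ c * ∑ p : V × V, (d' p : ℝ) * (OPT p : ℝ) := by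
    apply mul_le_mul_of_nonneg_left _ hcpos.le
    have := h3
    push_cast at this ⊢
    exact_mod_cast h3
  have step1 : ∑ p : V × V, (d p : ℝ) * (ALG p : ℝ)
      ≤ c * ∑ p : V × V, (d' p : ℝ) * (ALG p : ℝ) := by
    rw [Finset.mul_sum]
    apply Finset.sum_le_sum
    intro p _
    calc (d p : ℝ) * (ALG p : ℝ) ≤ (c * (d' p : ℝ)) * (ALG p : ℝ) :=
          mul_le_mul_of_nonneg_right (hlow p) (hALGnn p)
      _ = c * ((d' p : ℝ) * (ALG p : ℝ)) := by ring
  have step3 : c * ∑ p : V × V, (d' p : ℝ) * (OPT p : ℝ)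
      ≤ (∑ p : V × V, (d p : ℝ) * (OPT p : ℝ)) + c * ∑ p : V × V, (OPT p : ℝ) := by
    rw [Finset.mul_sum, Finset.mul_sum, ← Finset.sum_add_distrib]
    apply Finset.sum_le_sum
    intro p _
    calc c * ((d' p : ℝ) * (OPT p : ℝ)) = (c * (d' p : ℝ)) * (OPT p : ℝ) := by ring
      _ ≤ ((d p : ℝ) + c) * (OPT p : ℝ) :=
          mul_le_mul_of_nonneg_right (hhigh p) (hOPTnn p)
      _ = (d p : ℝ) * (OPT p : ℝ) + c * (OPT p : ℝ) := by ring
  have hsum1 : c * ∑ p : V × V, (OPT p : ℝ) ≤ c * K := by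
    apply mul_le_mul_of_nonneg_left _ hcpos.le
    exact_mod_cast h1
  have hcK : c * (K : ℝ) = ε * E := by rw [hc]; field_simp
  have h2' : ε * (E : ℝ) ≤ ε * ∑ p : V × V, (d p : ℝ) * (OPT p : ℝ) := by
    apply mul_le_mul_of_nonneg_left _ hε.le
    exact_mod_cast h2
  calc ∑ p : V × V, (d p : ℝ) * (ALG p : ℝ)
      ≤ c * ∑ p : V × V, (d' p : ℝ) * (ALG p : ℝ) := step1
    _ ≤ c * ∑ p : V × V, (d' p : ℝ) * (OPT p : ℝ) := h3'
    _ ≤ (∑ p : V × V, (d p : ℝ) * (OPT p : ℝ)) + c * ∑ p : V × V, (OPT p : ℝ) := step3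
    _ ≤ (∑ p : V × V, (d p : ℝ) * (OPT p : ℝ)) + c * K := by linarith
    _ = (∑ p : V × V, (d p : ℝ) * (OPT p : ℝ)) + ε * E := by rw [hcK]
    _ ≤ (∑ p : V × V, (d p : ℝ) * (OPT p : ℝ))
        + ε * ∑ p : V × V, (d p : ℝ) * (OPT p : ℝ) := by linarith
    _ = (1 + ε) * ∑ p : V × V, (d p : ℝ) * (OPT p : ℝ) := by ring
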